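/- Let f = (f11, f12, f22) ∈ C²_c(S²; D1). Then for every x ∈ ℝ²: −D_u D_v (L¹ f)(x) = 2 (u1² f11(x) + u2² f22(x)) + (D_u + D_v)(L⁰ f)(x), where L⁰ f = Lf is the longitudinal V-line transform and L¹ f its first moment. -/

import Mathlib

noncomputable section

open MeasureTheory

/-- The divergent beam transform `X_w h (x) = ∫₀^∞ h(x + t w) dt`. -/
def Xbeam (w : ℝ × ℝ) (h : ℝ × ℝ → ℝ) (x : ℝ × ℝ) : ℝ :=
  ∫ t in Set.Ioi (0 : ℝ), h (x + t • w)

/-- The k-th moment divergent beam transform `X_w^k h (x) = ∫₀^∞ t^k h(x + t w) dt`. -/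
def Xmom (k : ℕ) (w : ℝ × ℝ) (h : ℝ × ℝ → ℝ) (x : ℝ × ℝ) : ℝ :=
  ∫ t in Set.Ioi (0 : ℝ), t ^ k * h (x + t • w)

/-- The directional derivative `D_w h = w ⋅ ∇h`. -/
def Dir (w : ℝ × ℝ) (h : ℝ × ℝ → ℝ) (x : ℝ × ℝ) : ℝ :=
  fderiv ℝ h x w

/-- Support contained in the open unit disc `D1`. -/
def SuppInDisc (h : ℝ × ℝ → ℝ) : Prop :=
  ∀ x : ℝ × ℝ, 1 ≤ x.1 ^ 2 + x.2 ^ 2 → h x = 0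

/-- The longitudinal V-line transform. -/
def VlineL (u1 u2 : ℝ) (f11 f12 f22 : ℝ × ℝ → ℝ) : ℝ × ℝ → ℝ :=
  Xbeam (u1, u2) (fun y => u1 ^ 2 * f11 y + 2 * u1 * u2 * f12 y + u2 ^ 2 * f22 y)
    + Xbeam (-u1, u2) (fun y => u1 ^ 2 * f11 y - 2 * u1 * u2 * f12 y + u2 ^ 2 * f22 y)

/-- The transverse V-line transform. -/
def VlineT (u1 u2 : ℝ) (f11 f12 f22 : ℝ × ℝ → ℝ) : ℝ × ℝ → ℝ :=
  Xbeam (u1, u2) (fun y => u2 ^ 2 * f11 y - 2 * u1 * u2 * f12 y + u1 ^ 2 * f22 y)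
    + Xbeam (-u1, u2) (fun y => u2 ^ 2 * f11 y + 2 * u1 * u2 * f12 y + u1 ^ 2 * f22 y)

/-- The mixed V-line transform. -/
def VlineM (u1 u2 : ℝ) (f11 f12 f22 : ℝ × ℝ → ℝ) : ℝ × ℝ → ℝ :=
  Xbeam (u1, u2) (fun y => -(u1 * u2) * f11 y + (u1 ^ 2 - u2 ^ 2) * f12 y + u1 * u2 * f22 y)
    + Xbeam (-u1, u2) (fun y => u1 * u2 * f11 y + (u1 ^ 2 - u2 ^ 2) * f12 y - u1 * u2 * f22 y)

/-- The k-th moment longitudinal V-line transform. -/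
def VlineLk (k : ℕ) (u1 u2 : ℝ) (f11 f12 f22 : ℝ × ℝ → ℝ) : ℝ × ℝ → ℝ :=
  Xmom k (u1, u2) (fun y => u1 ^ 2 * f11 y + 2 * u1 * u2 * f12 y + u2 ^ 2 * f22 y)
    + Xmom k (-u1, u2) (fun y => u1 ^ 2 * f11 y - 2 * u1 * u2 * f12 y + u2 ^ 2 * f22 y)

/-- The k-th moment transverse V-line transform. -/
def VlineTk (k : ℕ) (u1 u2 : ℝ) (f11 f12 f22 : ℝ × ℝ → ℝ) : ℝ × ℝ → ℝ :=
  Xmom k (u1, u2) (fun y => u2 ^ 2 * f11 y - 2 * u1 * u2 * f12 y + u1 ^ 2 * f22 y)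
    + Xmom k (-u1, u2) (fun y => u2 ^ 2 * f11 y + 2 * u1 * u2 * f12 y + u1 ^ 2 * f22 y)

/-- The k-th moment mixed V-line transform. -/
def VlineMk (k : ℕ) (u1 u2 : ℝ) (f11 f12 f22 : ℝ × ℝ → ℝ) : ℝ × ℝ → ℝ :=
  Xmom k (u1, u2) (fun y => -(u1 * u2) * f11 y + (u1 ^ 2 - u2 ^ 2) * f12 y + u1 * u2 * f22 y)
    + Xmom k (-u1, u2) (fun y => u1 * u2 * f11 y + (u1 ^ 2 - u2 ^ 2) * f12 y - u1 * u2 * f22 y)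


section VLAux
open Set Filter Metric
set_option synthInstance.maxHeartbeats 1000000
set_option maxHeartbeats 1000000




lemma vanish {w : ℝ × ℝ} (hw : w.1 ^ 2 + w.2 ^ 2 = 1) {h : ℝ × ℝ → ℝ}
    (hs : SuppInDisc h) (x : ℝ × ℝ) {t : ℝ} (ht : 2 * (|x.1| + |x.2|) + 1 ≤ t) :
    h (x + t • w) = 0 := by
  apply hs
  have hx1 : (x + t • w).1 = x.1 + t * w.1 := rfl
  have hx2 : (x + t • w).2 = x.2 + t * w.2 := rfl
  rw [hx1, hx2]
  have hw1 : |w.1| ≤ 1 := by nlinarith [sq_abs w.1, sq_abs w.2, abs_nonneg w.1, abs_nonneg w.2, sq_nonneg (|w.1| - 1)]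
  have hw2 : |w.2| ≤ 1 := by nlinarith [sq_abs w.1, sq_abs w.2, abs_nonneg w.2, abs_nonneg w.1, sq_nonneg (|w.2| - 1)]
  have hb1 : -|x.1| ≤ x.1 * w.1 := by
    have := abs_mul x.1 w.1
    have h2 : |x.1 * w.1| ≤ |x.1| := by
      rw [this]; exact mul_le_of_le_one_right (abs_nonneg _) hw1
    linarith [neg_abs_le (x.1 * w.1)]
  have hb2 : -|x.2| ≤ x.2 * w.2 := by
    have := abs_mul x.2 w.2
    have h2 : |x.2 * w.2| ≤ |x.2| := by
      rw [this]; exact mul_le_of_le_one_right (abs_nonneg _) hw2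
    linarith [neg_abs_le (x.2 * w.2)]
  have ht1 : 1 ≤ t := by nlinarith [abs_nonneg x.1, abs_nonneg x.2]
  have ht0 : 0 ≤ t := by linarith
  have h5 : 1 ≤ t - 2 * (|x.1| + |x.2|) := by linarith
  have h6 : t * 1 ≤ t * (t - 2 * (|x.1| + |x.2|)) := mul_le_mul_of_nonneg_left h5 ht0
  have h7 : -(|x.1| + |x.2|) ≤ x.1 * w.1 + x.2 * w.2 := by linarith
  have h8 : 2 * t * (-(|x.1| + |x.2|)) ≤ 2 * t * (x.1 * w.1 + x.2 * w.2) :=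
    mul_le_mul_of_nonneg_left h7 (by linarith)
  have hexp : (x.1 + t * w.1) ^ 2 + (x.2 + t * w.2) ^ 2 =
      (x.1 ^ 2 + x.2 ^ 2) + 2 * t * (x.1 * w.1 + x.2 * w.2) + t ^ 2 * (w.1 ^ 2 + w.2 ^ 2) := by
    ring
  rw [hexp, hw]
  nlinarith [sq_nonneg x.1, sq_nonneg x.2]

lemma fderiv_vanish {h : ℝ × ℝ → ℝ} (hC : ContDiff ℝ 1 h) (hs : SuppInDisc h)
    {y : ℝ × ℝ} (hy : 1 ≤ y.1 ^ 2 + y.2 ^ 2) : fderiv ℝ h y = 0 := by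
  have hcont : Continuous (fderiv ℝ h) := hC.continuous_fderiv one_ne_zero
  have hconte : Continuous fun p : ℝ × ℝ => p.1 ^ 2 + p.2 ^ 2 := by fun_prop
  have hopen : IsOpen {p : ℝ × ℝ | 1 < p.1 ^ 2 + p.2 ^ 2} :=
    isOpen_lt continuous_const hconte
  have hzero : Set.EqOn (fderiv ℝ h) (fun _ => 0) {p : ℝ × ℝ | 1 < p.1 ^ 2 + p.2 ^ 2} := by
    intro z hz
    have hev : h =ᶠ[nhds z] (fun _ => (0:ℝ)) := by
      filter_upwards [hopen.mem_nhds hz] with p hp using hs p hp.le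
    simp only
    rw [hev.fderiv_eq, fderiv_const_apply]
  have hcl : Set.EqOn (fderiv ℝ h) (fun _ => 0)
      (closure {p : ℝ × ℝ | 1 < p.1 ^ 2 + p.2 ^ 2}) :=
    hzero.closure hcont continuous_const
  rcases lt_or_eq_of_le hy with hlt | heq
  · exact hzero hlt
  · apply hcl
    have hy0 : y ≠ 0 := by
      intro h0; rw [h0] at heq; simp at heq
    have htend : Tendsto (fun c : ℝ => c • y) (nhdsWithin 1 (Ioi 1)) (nhds y) := by
      have : Tendsto (fun c : ℝ => c • y) (nhds 1) (nhds ((1:ℝ) • y)) :=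
        (continuous_id.smul continuous_const).tendsto 1
      rw [one_smul] at this
      exact this.mono_left nhdsWithin_le_nhds
    refine mem_closure_of_tendsto htend ?_
    filter_upwards [self_mem_nhdsWithin] with c (hc : 1 < c)
    show 1 < (c • y).1 ^ 2 + (c • y).2 ^ 2
    have h1 : (c • y).1 = c * y.1 := rfl
    have h2 : (c • y).2 = c * y.2 := rfl
    rw [h1, h2]
    nlinarith [mul_pos (show (0:ℝ) < c - 1 by linarith) (show (0:ℝ) < c + 1 by linarith)]

lemma fderiv_bound {h : ℝ × ℝ → ℝ} (hC : ContDiff ℝ 1 h) (hs : SuppInDisc h) :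
    ∃ C : ℝ, 0 ≤ C ∧ ∀ y, ‖fderiv ℝ h y‖ ≤ C := by
  have hcont : Continuous (fderiv ℝ h) := hC.continuous_fderiv one_ne_zero
  obtain ⟨C, hCb⟩ := (isCompact_closedBall (0 : ℝ × ℝ) 1).exists_bound_of_continuousOn
    hcont.continuousOn
  refine ⟨max C 0, le_max_right _ _, fun y => ?_⟩
  by_cases hy : y ∈ closedBall (0 : ℝ × ℝ) 1
  · exact (hCb y hy).trans (le_max_left _ _)
  · have h1 : 1 < ‖y‖ := by
      simp [closedBall, dist_eq_norm] at hy; linarith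
    have hnorm : ‖y‖ = max |y.1| |y.2| := by
      rw [Prod.norm_def, Real.norm_eq_abs, Real.norm_eq_abs]
    have : 1 ≤ y.1 ^ 2 + y.2 ^ 2 := by
      rw [hnorm] at h1
      rcases max_cases |y.1| |y.2| with ⟨hm, _⟩ | ⟨hm, _⟩ <;> rw [hm] at h1 <;>
        nlinarith [sq_abs y.1, sq_abs y.2, sq_nonneg y.1, sq_nonneg y.2]
    rw [fderiv_vanish hC hs this]
    simp [le_max_right]



lemma cont_integrand {w : ℝ × ℝ} {h : ℝ × ℝ → ℝ} (hc : Continuous h) (k : ℕ) (x : ℝ × ℝ) :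
    Continuous fun t : ℝ => t ^ k * h (x + t • w) := by
  fun_prop

lemma xmom_eq_Ioc (k : ℕ) {w : ℝ × ℝ} (hw : w.1 ^ 2 + w.2 ^ 2 = 1) {h : ℝ × ℝ → ℝ}
    (hc : Continuous h) (hs : SuppInDisc h) (x : ℝ × ℝ) {T : ℝ}
    (hT : 2 * (|x.1| + |x.2|) + 1 ≤ T) :
    Xmom k w h x = ∫ t in Set.Ioc 0 T, t ^ k * h (x + t • w) := by
  have hT0 : (0 : ℝ) < T := lt_of_lt_of_le (by positivity) hT
  have hzero : ∀ t ∈ Set.Ioi T, t ^ k * h (x + t • w) = 0 := by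
    intro t ht
    rw [vanish hw hs x (le_trans hT (le_of_lt ht)), mul_zero]
  rw [Xmom, ← Set.Ioc_union_Ioi_eq_Ioi hT0.le, setIntegral_union (Set.Ioc_disjoint_Ioi le_rfl)
    measurableSet_Ioi ((cont_integrand hc k x).integrableOn_Ioc)
    ((integrableOn_congr_fun hzero measurableSet_Ioi).mpr integrableOn_zero),
    setIntegral_eq_zero_of_forall_eq_zero hzero, add_zero]



lemma xmom_hasFDerivAt (k : ℕ) {w : ℝ × ℝ} (hw : w.1 ^ 2 + w.2 ^ 2 = 1) {h : ℝ × ℝ → ℝ}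
    (hC : ContDiff ℝ 1 h) (hs : SuppInDisc h) (x₀ : ℝ × ℝ) :
    HasFDerivAt (Xmom k w h)
      (∫ t in Set.Ioc (0 : ℝ) (2 * (|x₀.1| + |x₀.2|) + 5), t ^ k • fderiv ℝ h (x₀ + t • w)) x₀ := by
  set T := 2 * (|x₀.1| + |x₀.2|) + 5 with hTdef
  have hT0 : (0 : ℝ) < T := by positivity
  obtain ⟨C, hC0, hCb⟩ := fderiv_bound hC hs
  have hcont : Continuous h := hC.continuous
  have hcontf : Continuous (fderiv ℝ h) := hC.continuous_fderiv one_ne_zero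
  have hder : ∀ (x : ℝ × ℝ) (t : ℝ), HasFDerivAt (fun x => t ^ k * h (x + t • w))
      (t ^ k • fderiv ℝ h (x + t • w)) x := by
    intro x t
    have h1 : HasFDerivAt (fun x : ℝ × ℝ => x + t • w) (ContinuousLinearMap.id ℝ (ℝ × ℝ)) x :=
      (hasFDerivAt_id x).add_const (t • w)
    have h2 := ((hC.differentiable one_ne_zero) (x + t • w)).hasFDerivAt.comp x h1
    simpa [ContinuousLinearMap.comp_id] using h2.const_mul (t ^ k)
  have key : HasFDerivAt (fun x => ∫ t in Set.Ioc (0 : ℝ) T, t ^ k * h (x + t • w))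
      (∫ t in Set.Ioc (0 : ℝ) T, t ^ k • fderiv ℝ h (x₀ + t • w)) x₀ := by
    apply hasFDerivAt_integral_of_dominated_of_fderiv_le
      (F' := fun x t => t ^ k • fderiv ℝ h (x + t • w))
      (bound := fun _ => (max 1 T) ^ k * C) (Metric.ball_mem_nhds x₀ one_pos)
    · filter_upwards with x
      exact ((cont_integrand hcont k x).aestronglyMeasurable)
    · exact (cont_integrand hcont k x₀).integrableOn_Ioc
    · exact ((continuous_pow k).smul (hcontf.comp
        (continuous_const.add (continuous_id.smul continuous_const)))).aestronglyMeasurable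
    · filter_upwards [ae_restrict_mem measurableSet_Ioc] with t ht x _
      rw [norm_smul (t ^ k) (fderiv ℝ h (x + t • w)), Real.norm_eq_abs, abs_pow, abs_of_pos ht.1]
      have h1 : t ^ k ≤ max 1 T ^ k := pow_le_pow_left₀ ht.1.le (le_trans ht.2 (le_max_right _ _)) k
      have h2 : ‖fderiv ℝ h (x + t • w)‖ ≤ C := hCb _
      exact mul_le_mul h1 h2 (norm_nonneg _) (by positivity)
    · exact integrableOn_const measure_Ioc_lt_top.ne
    · filter_upwards with t x _
      exact hder x t
  apply key.congr_of_eventuallyEq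
  filter_upwards [Metric.ball_mem_nhds x₀ one_pos] with x hx
  apply xmom_eq_Ioc k hw hcont hs
  have h1 : |x.1 - x₀.1| ≤ ‖x - x₀‖ := by
    rw [Prod.norm_def]; exact le_trans (le_max_left _ _) le_rfl
  have h2 : |x.2 - x₀.2| ≤ ‖x - x₀‖ := by
    rw [Prod.norm_def]; exact le_max_right _ _
  rw [Metric.mem_ball, dist_eq_norm] at hx
  have e1 : |x.1| ≤ |x₀.1| + 1 := by
    have := abs_sub_abs_le_abs_sub x.1 x₀.1
    have : |x.1| - |x₀.1| ≤ |x.1 - x₀.1| := this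
    linarith [le_trans h1 hx.le]
  have e2 : |x.2| ≤ |x₀.2| + 1 := by
    have := abs_sub_abs_le_abs_sub x.2 x₀.2
    linarith [le_trans h2 hx.le]
  rw [hTdef]; linarith

lemma dir_xmom (k : ℕ) {w : ℝ × ℝ} (hw : w.1 ^ 2 + w.2 ^ 2 = 1) {h : ℝ × ℝ → ℝ}
    (hC : ContDiff ℝ 1 h) (hs : SuppInDisc h) (ξ x : ℝ × ℝ) :
    Dir ξ (Xmom k w h) x = Xmom k w (fun y => Dir ξ h y) x := by
  have H := xmom_hasFDerivAt k hw hC hs x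
  have hcontf : Continuous (fderiv ℝ h) := hC.continuous_fderiv one_ne_zero
  have hInt : IntegrableOn (fun t : ℝ => t ^ k • fderiv ℝ h (x + t • w))
      (Set.Ioc (0 : ℝ) (2 * (|x.1| + |x.2|) + 5)) volume := by
    apply Continuous.integrableOn_Ioc
    exact (continuous_pow k).smul (hcontf.comp
      (continuous_const.add (continuous_id.smul continuous_const)))
  have hsD : SuppInDisc (fun y => Dir ξ h y) := by
    intro y hy
    simp only [Dir, fderiv_vanish hC hs hy, ContinuousLinearMap.zero_apply]
  have hcD : Continuous (fun y => Dir ξ h y) := hcontf.clm_apply continuous_const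
  rw [Dir, H.fderiv, ContinuousLinearMap.integral_apply hInt,
    xmom_eq_Ioc k hw hcD hsD x (by linarith : 2 * (|x.1| + |x.2|) + 1 ≤ 2 * (|x.1| + |x.2|) + 5)]
  simp only [Dir, ContinuousLinearMap.smul_apply, smul_eq_mul]

lemma xmom_differentiableAt (k : ℕ) {w : ℝ × ℝ} (hw : w.1 ^ 2 + w.2 ^ 2 = 1) {h : ℝ × ℝ → ℝ}
    (hC : ContDiff ℝ 1 h) (hs : SuppInDisc h) (x : ℝ × ℝ) :
    DifferentiableAt ℝ (Xmom k w h) x :=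
  (xmom_hasFDerivAt k hw hC hs x).differentiableAt

lemma suppD {h : ℝ × ℝ → ℝ} (hC : ContDiff ℝ 1 h) (hs : SuppInDisc h) (ξ : ℝ × ℝ) :
    SuppInDisc (fun y => Dir ξ h y) := by
  intro y hy
  simp only [Dir, fderiv_vanish hC hs hy, ContinuousLinearMap.zero_apply]

lemma contD {h : ℝ × ℝ → ℝ} (hC : ContDiff ℝ 1 h) (ξ : ℝ × ℝ) :
    Continuous (fun y => Dir ξ h y) :=
  (hC.continuous_fderiv one_ne_zero).clm_apply continuous_const

lemma hasDerivAt_line {h : ℝ × ℝ → ℝ} (hC : ContDiff ℝ 1 h) (w x : ℝ × ℝ) (t : ℝ) :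
    HasDerivAt (fun t : ℝ => h (x + t • w)) (Dir w h (x + t • w)) t := by
  have hl : HasDerivAt (fun t : ℝ => x + t • w) w t := by
    simpa using ((hasDerivAt_id t).smul_const w).const_add x
  exact ((hC.differentiable one_ne_zero) _).hasFDerivAt.comp_hasDerivAt t hl

lemma cont_line {h : ℝ × ℝ → ℝ} (hc : Continuous h) (w x : ℝ × ℝ) :
    Continuous (fun t : ℝ => h (x + t • w)) :=
  hc.comp (continuous_const.add (continuous_id.smul continuous_const))

lemma xmom0_dir_self {w : ℝ × ℝ} (hw : w.1 ^ 2 + w.2 ^ 2 = 1) {h : ℝ × ℝ → ℝ}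
    (hC : ContDiff ℝ 1 h) (hs : SuppInDisc h) (x : ℝ × ℝ) :
    Xmom 0 w (fun y => Dir w h y) x = -h x := by
  set T := 2 * (|x.1| + |x.2|) + 1 with hTdef
  have hT0 : (0 : ℝ) < T := by positivity
  rw [xmom_eq_Ioc 0 hw (contD hC w) (suppD hC hs w) x le_rfl]
  simp only [pow_zero, one_mul]
  rw [← intervalIntegral.integral_of_le hT0.le]
  rw [intervalIntegral.integral_eq_sub_of_hasDerivAt
    (fun t _ => hasDerivAt_line hC w x t)
    ((cont_line (contD hC w) w x).intervalIntegrable 0 T)]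
  rw [vanish hw hs x le_rfl]
  simp

lemma xmom1_dir_self {w : ℝ × ℝ} (hw : w.1 ^ 2 + w.2 ^ 2 = 1) {h : ℝ × ℝ → ℝ}
    (hC : ContDiff ℝ 1 h) (hs : SuppInDisc h) (x : ℝ × ℝ) :
    Xmom 1 w (fun y => Dir w h y) x = -Xmom 0 w h x := by
  set T := 2 * (|x.1| + |x.2|) + 1 with hTdef
  have hT0 : (0 : ℝ) < T := by positivity
  have hcont : Continuous h := hC.continuous
  rw [xmom_eq_Ioc 1 hw (contD hC w) (suppD hC hs w) x le_rfl,
    xmom_eq_Ioc 0 hw hcont hs x le_rfl]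
  simp only [pow_zero, pow_one, one_mul]
  rw [← intervalIntegral.integral_of_le hT0.le, ← intervalIntegral.integral_of_le hT0.le]
  have hderiv : ∀ t : ℝ, HasDerivAt (fun t : ℝ => t * h (x + t • w))
      (h (x + t • w) + t * Dir w h (x + t • w)) t := by
    intro t
    have := (hasDerivAt_id' t).mul (hasDerivAt_line hC w x t)
    simp only [one_mul] at this; exact this
  have hint1 : IntervalIntegrable (fun t : ℝ => h (x + t • w)) volume 0 T :=
    (cont_line hcont w x).intervalIntegrable 0 T
  have hint2 : IntervalIntegrable (fun t : ℝ => t * Dir w h (x + t • w)) volume 0 T :=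
    (continuous_id.mul (cont_line (contD hC w) w x)).intervalIntegrable 0 T
  have heq : ∫ t in (0:ℝ)..T, (h (x + t • w) + t * Dir w h (x + t • w)) =
      T * h (x + T • w) - 0 * h (x + (0:ℝ) • w) := by
    have := intervalIntegral.integral_eq_sub_of_hasDerivAt (fun t _ => hderiv t)
      (hint1.add hint2)
    simpa using this
  rw [intervalIntegral.integral_add hint1 hint2, vanish hw hs x le_rfl] at heq
  linarith

lemma Dir_add {F G : ℝ × ℝ → ℝ} {x : ℝ × ℝ} (hF : DifferentiableAt ℝ F x)
    (hG : DifferentiableAt ℝ G x) (w : ℝ × ℝ) :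
    Dir w (F + G) x = Dir w F x + Dir w G x := by
  simp only [Dir, fderiv_add hF hG, ContinuousLinearMap.add_apply]

lemma Dir_sub {F G : ℝ × ℝ → ℝ} {x : ℝ × ℝ} (hF : DifferentiableAt ℝ F x)
    (hG : DifferentiableAt ℝ G x) (w : ℝ × ℝ) :
    Dir w (fun y => F y - G y) x = Dir w F x - Dir w G x := by
  simp only [Dir, fderiv_fun_sub hF hG, ContinuousLinearMap.sub_apply]

end VLAux

/-- relation between the first moment longitudinal V-line transform
and the longitudinal V-line transform. -/
theorem first_moment_relation
    (u1 u2 : ℝ) (hu : u1 ^ 2 + u2 ^ 2 = 1) (hu1 : 0 < u1) (hu2 : 0 < u2)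
    (f11 f12 f22 : ℝ × ℝ → ℝ)
    (h11 : ContDiff ℝ 2 f11) (h12 : ContDiff ℝ 2 f12) (h22 : ContDiff ℝ 2 f22)
    (s11 : SuppInDisc f11) (s12 : SuppInDisc f12) (s22 : SuppInDisc f22)
    (x : ℝ × ℝ) :
    -Dir (u1, u2) (Dir (-u1, u2) (VlineLk 1 u1 u2 f11 f12 f22)) x =
      2 * (u1 ^ 2 * f11 x + u2 ^ 2 * f22 x) +
        (Dir (u1, u2) (VlineLk 0 u1 u2 f11 f12 f22) x +
          Dir (-u1, u2) (VlineLk 0 u1 u2 f11 f12 f22) x) := by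
  have hwu : ((u1, u2) : ℝ × ℝ).1 ^ 2 + ((u1, u2) : ℝ × ℝ).2 ^ 2 = 1 := hu
  have hwv : ((-u1, u2) : ℝ × ℝ).1 ^ 2 + ((-u1, u2) : ℝ × ℝ).2 ^ 2 = 1 := by
    simpa using hu
  set gU : ℝ × ℝ → ℝ := fun y => u1 ^ 2 * f11 y + 2 * u1 * u2 * f12 y + u2 ^ 2 * f22 y
    with hgUdef
  set gV : ℝ × ℝ → ℝ := fun y => u1 ^ 2 * f11 y - 2 * u1 * u2 * f12 y + u2 ^ 2 * f22 y
    with hgVdef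
  have hgU2 : ContDiff ℝ 2 gU :=
    ((contDiff_const.mul h11).add (contDiff_const.mul h12)).add (contDiff_const.mul h22)
  have hgV2 : ContDiff ℝ 2 gV :=
    ((contDiff_const.mul h11).sub (contDiff_const.mul h12)).add (contDiff_const.mul h22)
  have hgU1 : ContDiff ℝ 1 gU := hgU2.of_le one_le_two
  have hgV1 : ContDiff ℝ 1 gV := hgV2.of_le one_le_two
  have sU : SuppInDisc gU := fun y hy => by
    simp [hgUdef, s11 y hy, s12 y hy, s22 y hy]
  have sV : SuppInDisc gV := fun y hy => by
    simp [hgVdef, s11 y hy, s12 y hy, s22 y hy]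
  have hDvgU1 : ContDiff ℝ 1 (fun y => Dir (-u1, u2) gU y) :=
    (hgU2.fderiv_right (m := 1) (by norm_num)).clm_apply
      (contDiff_const (c := ((-u1, u2) : ℝ × ℝ)))
  have sDvgU : SuppInDisc (fun y => Dir (-u1, u2) gU y) := suppD hgU1 sU _
  have inner_eq : Dir (-u1, u2) (VlineLk 1 u1 u2 f11 f12 f22) =
      fun z => Xmom 1 (u1, u2) (fun y => Dir (-u1, u2) gU y) z -
        Xmom 0 (-u1, u2) gV z := by
    funext z
    have e1 : VlineLk 1 u1 u2 f11 f12 f22 =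
        Xmom 1 (u1, u2) gU + Xmom 1 (-u1, u2) gV := rfl
    rw [e1, Dir_add (xmom_differentiableAt 1 hwu hgU1 sU z)
        (xmom_differentiableAt 1 hwv hgV1 sV z),
      dir_xmom 1 hwu hgU1 sU _ z, dir_xmom 1 hwv hgV1 sV _ z,
      xmom1_dir_self hwv hgV1 sV z]
    ring
  have lhs_eq : Dir (u1, u2) (Dir (-u1, u2) (VlineLk 1 u1 u2 f11 f12 f22)) x =
      -Xmom 0 (u1, u2) (fun y => Dir (-u1, u2) gU y) x -
        Xmom 0 (-u1, u2) (fun y => Dir (u1, u2) gV y) x := by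
    rw [inner_eq, Dir_sub (xmom_differentiableAt 1 hwu hDvgU1 sDvgU x)
        (xmom_differentiableAt 0 hwv hgV1 sV x),
      dir_xmom 1 hwu hDvgU1 sDvgU _ x, xmom1_dir_self hwu hDvgU1 sDvgU x,
      dir_xmom 0 hwv hgV1 sV _ x]
  have e0 : VlineLk 0 u1 u2 f11 f12 f22 =
      Xmom 0 (u1, u2) gU + Xmom 0 (-u1, u2) gV := rfl
  have r1 : Dir (u1, u2) (VlineLk 0 u1 u2 f11 f12 f22) x =
      -gU x + Xmom 0 (-u1, u2) (fun y => Dir (u1, u2) gV y) x := by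
    rw [e0, Dir_add (xmom_differentiableAt 0 hwu hgU1 sU x)
        (xmom_differentiableAt 0 hwv hgV1 sV x),
      dir_xmom 0 hwu hgU1 sU _ x, xmom0_dir_self hwu hgU1 sU x,
      dir_xmom 0 hwv hgV1 sV _ x]
  have r2 : Dir (-u1, u2) (VlineLk 0 u1 u2 f11 f12 f22) x =
      Xmom 0 (u1, u2) (fun y => Dir (-u1, u2) gU y) x - gV x := by
    rw [e0, Dir_add (xmom_differentiableAt 0 hwu hgU1 sU x)
        (xmom_differentiableAt 0 hwv hgV1 sV x),
      dir_xmom 0 hwu hgU1 sU _ x, dir_xmom 0 hwv hgV1 sV _ x,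
      xmom0_dir_self hwv hgV1 sV x]
    ring
  have hsum : gU x + gV x = 2 * (u1 ^ 2 * f11 x + u2 ^ 2 * f22 x) := by
    rw [hgUdef, hgVdef]; ring
  rw [lhs_eq, r1, r2]
  linarith
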